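/- For every N ≥ 2 and every t ∈ [0,1], the derivative of the interpolating quenched free energy of the two-leg ladder satisfies (d/dt) f_N^ladder(t) = -(βN)^{-1} Σ_{i=1}^{N} E[ log( ⟨e^{β(K_{i,1}σ_{i,1}σ_{i+1,1} + K_{i,2}σ_{i,2}σ_{i+1,2})}⟩_{H_{\i}(t)} / ⟨e^{β(l̂_{i,1}σ_{i,1}σ_{i,2} + l̂_{i,2}σ_{i+1,1}σ_{i+1,2})}⟩_{H_{\i}(t)} ) ], where H_{\i}(t) is the interpolating ladder Hamiltonian with the i-th interpolated slice removed (it contains neither K_{i,1}, K_{i,2}, l̂_{i,1}, l̂_{i,2} nor M_i) and ⟨·⟩_{H_{\i}(t)} is the Gibbs thermal average with respect to H_{\i}(t) at inverse temperature β. -/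

import Mathlib

open MeasureTheory Real Filter

/-- Spin value of a Boolean spin variable: `true ↦ 1`, `false ↦ -1`. -/
noncomputable def spin (b : Bool) : ℝ := if b then 1 else -1

/-- Cyclic successor on `Fin N`. -/
def nxt {N : ℕ} (i : Fin N) : Fin N := ⟨(i.val + 1) % N, Nat.mod_lt _ i.pos⟩

/-- Inverse hyperbolic tangent. -/
noncomputable def artanh (x : ℝ) : ℝ := Real.log ((1 + x) / (1 - x)) / 2

/-- Partition function of the two-leg ladder Ising spin glass with periodic boundary
conditions: a configuration `σ : Fin N → Bool × Bool` gives the spins `(σ i).1 = σ_{i,1}`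
and `(σ i).2 = σ_{i,2}` on the two legs. -/
noncomputable def ladderZ (N : ℕ) (β : ℝ) (K1 K2 L : Fin N → ℝ) : ℝ :=
  ∑ σ : Fin N → Bool × Bool,
    Real.exp (β * ((∑ i : Fin N, L i * spin (σ i).1 * spin (σ i).2) +
      ∑ i : Fin N, (K1 i * spin (σ i).1 * spin (σ (nxt i)).1 +
        K2 i * spin (σ i).2 * spin (σ (nxt i)).2)))

/-- Quenched free energy density `f_N^ladder` of the two-leg ladder, with i.i.d. couplings
`K_{i,1} ~ μ1`, `K_{i,2} ~ μ2` and rung couplings `L_i ~ μL`, all independent. -/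
noncomputable def ladderF (β : ℝ) (μ1 μ2 μL : Measure ℝ) (N : ℕ) : ℝ :=
  -(1 / (β * N)) * ∫ ω : (Fin N → ℝ) × (Fin N → ℝ) × (Fin N → ℝ),
    Real.log (ladderZ N β ω.1 ω.2.1 ω.2.2) ∂((Measure.pi fun _ : Fin N => μ1).prod
      ((Measure.pi fun _ : Fin N => μ2).prod (Measure.pi fun _ : Fin N => μL)))

/-- The replica symmetric cavity free energy `f_RS^ladder`; the coordinates are
`ω.1 = K_1`, `ω.2.1 = K_2`, `ω.2.2.1 = L`, `ω.2.2.2 = l̂`. -/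
noncomputable def ladderRS (β : ℝ) (μ1 μ2 μL μl : Measure ℝ) : ℝ :=
  -(1 / β) * ∫ ω : ℝ × ℝ × ℝ × ℝ,
    Real.log (4 * Real.cosh (β * ω.1) * Real.cosh (β * ω.2.1) *
      Real.cosh (β * (ω.2.2.1 + ω.2.2.2)) / Real.cosh (β * ω.2.2.2))
    ∂(μ1.prod (μ2.prod (μL.prod μl)))

/-- `μl` is a ladder cavity measure for `(β, μ1, μ2, μL)`: if `K_1 ~ μ1`, `K_2 ~ μ2`,
`L ~ μL`, `l̂' ~ μl` are independent then `(1/β)·artanh(tanh(βK_1)tanh(βK_2)tanh(β(L+l̂')))`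
again has law `μl`. -/
def IsLadderCavity (β : ℝ) (μ1 μ2 μL μl : Measure ℝ) : Prop :=
  Measure.map (fun ω : ℝ × ℝ × ℝ × ℝ =>
    (1 / β) * _root_.artanh (Real.tanh (β * ω.1) * Real.tanh (β * ω.2.1) *
      Real.tanh (β * (ω.2.2.1 + ω.2.2.2)))) (μ1.prod (μ2.prod (μL.prod μl))) = μl

/-- Bernoulli weight of an outcome `m : Bool` for a Bernoulli variable with mean `t`. -/
noncomputable def bern (t : ℝ) (m : Bool) : ℝ := if m then t else 1 - t

/-- Partition function of the interpolating ladder Hamiltonian for a fixed realization of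
the leg couplings `K1, K2`, rung couplings `L`, cavity couplings `l1, l2` and dilution
variables `m`: an active slice (`m i = true`) carries the leg interactions
`K_{i,1} σ_{i,1} σ_{i+1,1} + K_{i,2} σ_{i,2} σ_{i+1,2}`, while an inactive slice carries
the cavity couplings `l̂_{i,1} σ_{i,1} σ_{i,2} + l̂_{i,2} σ_{i+1,1} σ_{i+1,2}`. -/
noncomputable def ladderZt (N : ℕ) (β : ℝ) (K1 K2 L l1 l2 : Fin N → ℝ)
    (m : Fin N → Bool) : ℝ :=
  ∑ σ : Fin N → Bool × Bool,
    Real.exp (β * ((∑ i : Fin N, L i * spin (σ i).1 * spin (σ i).2) +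
      ∑ i : Fin N,
        (if m i then K1 i * spin (σ i).1 * spin (σ (nxt i)).1 +
            K2 i * spin (σ i).2 * spin (σ (nxt i)).2
          else l1 i * spin (σ i).1 * spin (σ i).2 +
            l2 i * spin (σ (nxt i)).1 * spin (σ (nxt i)).2)))

/-- Interpolating quenched free energy `f_N^ladder(t)` of the two-leg ladder: the
expectation over the i.i.d. Bernoulli dilution variables `M_i` with mean `t` is written as
a weighted sum, and the expectation over `K_{·,1}, K_{·,2}, L, l̂_{·,1}, l̂_{·,2}` as an
integral with respect to the product measure (coordinates `ω.1 = K_{·,1}`,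
`ω.2.1 = K_{·,2}`, `ω.2.2.1 = L`, `ω.2.2.2.1 = l̂_{·,1}`, `ω.2.2.2.2 = l̂_{·,2}`). -/
noncomputable def ladderFt (β : ℝ) (μ1 μ2 μL μl : Measure ℝ) (N : ℕ) (t : ℝ) : ℝ :=
  -(1 / (β * N)) *
    ∫ ω : (Fin N → ℝ) × (Fin N → ℝ) × (Fin N → ℝ) × (Fin N → ℝ) × (Fin N → ℝ),
      ∑ m : Fin N → Bool, (∏ i : Fin N, bern t (m i)) *
        Real.log (ladderZt N β ω.1 ω.2.1 ω.2.2.1 ω.2.2.2.1 ω.2.2.2.2 m)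
    ∂((Measure.pi fun _ : Fin N => μ1).prod ((Measure.pi fun _ : Fin N => μ2).prod
      ((Measure.pi fun _ : Fin N => μL).prod ((Measure.pi fun _ : Fin N => μl).prod
        (Measure.pi fun _ : Fin N => μl)))))

/-- Weighted sum `∑_σ g(σ) e^{-β H_{\i}(t)(σ)}` for the interpolating ladder Hamiltonian
with the `i`-th interpolated slice removed (it contains neither `K_{i,1}`, `K_{i,2}`,
`l̂_{i,1}`, `l̂_{i,2}` nor `M_i`). -/
noncomputable def ladderCutW (N : ℕ) (β : ℝ) (K1 K2 L l1 l2 : Fin N → ℝ)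
    (m : Fin N → Bool) (i : Fin N) (g : (Fin N → Bool × Bool) → ℝ) : ℝ :=
  ∑ σ : Fin N → Bool × Bool, g σ *
    Real.exp (β * ((∑ j : Fin N, L j * spin (σ j).1 * spin (σ j).2) +
      ∑ j ∈ Finset.univ.erase i,
        (if m j then K1 j * spin (σ j).1 * spin (σ (nxt j)).1 +
            K2 j * spin (σ j).2 * spin (σ (nxt j)).2
          else l1 j * spin (σ j).1 * spin (σ j).2 +
            l2 j * spin (σ (nxt j)).1 * spin (σ (nxt j)).2)))

/-- Gibbs thermal average `⟨g⟩_{H_{\i}(t)}` with respect to the interpolating ladder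
Hamiltonian with the `i`-th interpolated slice removed. -/
noncomputable def ladderCutAvg (N : ℕ) (β : ℝ) (K1 K2 L l1 l2 : Fin N → ℝ)
    (m : Fin N → Bool) (i : Fin N) (g : (Fin N → Bool × Bool) → ℝ) : ℝ :=
  ladderCutW N β K1 K2 L l1 l2 m i g / ladderCutW N β K1 K2 L l1 l2 m i (fun _ => 1)

section AuxLemmas

open Finset

lemma abs_spin (b : Bool) : |spin b| = 1 := by cases b <;> simp [spin]

lemma ladderZt_pos (N : ℕ) (β : ℝ) (K1 K2 L l1 l2 : Fin N → ℝ) (m : Fin N → Bool) :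
    0 < ladderZt N β K1 K2 L l1 l2 m :=
  Finset.sum_pos (fun _ _ => Real.exp_pos _) Finset.univ_nonempty

/-- Total coupling strength. -/
noncomputable def cS (N : ℕ) (K1 K2 L l1 l2 : Fin N → ℝ) : ℝ :=
  ∑ j : Fin N, (|L j| + (|K1 j| + |K2 j| + |l1 j| + |l2 j|))

lemma cS_nonneg (N : ℕ) (K1 K2 L l1 l2 : Fin N → ℝ) : 0 ≤ cS N K1 K2 L l1 l2 :=
  Finset.sum_nonneg fun j _ => by positivity

lemma ladderZt_expo_abs_le (N : ℕ) (K1 K2 L l1 l2 : Fin N → ℝ) (m : Fin N → Bool)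
    (σ : Fin N → Bool × Bool) :
    |(∑ j : Fin N, L j * spin (σ j).1 * spin (σ j).2) +
        ∑ j : Fin N,
          (if m j then K1 j * spin (σ j).1 * spin (σ (nxt j)).1 +
              K2 j * spin (σ j).2 * spin (σ (nxt j)).2
            else l1 j * spin (σ j).1 * spin (σ j).2 +
              l2 j * spin (σ (nxt j)).1 * spin (σ (nxt j)).2)| ≤ cS N K1 K2 L l1 l2 := by
  have h1 : |∑ j : Fin N, L j * spin (σ j).1 * spin (σ j).2| ≤ ∑ j : Fin N, |L j| := by
    refine (Finset.abs_sum_le_sum_abs _ _).trans (Finset.sum_le_sum fun j _ => ?_)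
    rw [abs_mul, abs_mul, abs_spin, abs_spin, mul_one, mul_one]
  have h2 : |∑ j : Fin N,
          (if m j then K1 j * spin (σ j).1 * spin (σ (nxt j)).1 +
              K2 j * spin (σ j).2 * spin (σ (nxt j)).2
            else l1 j * spin (σ j).1 * spin (σ j).2 +
              l2 j * spin (σ (nxt j)).1 * spin (σ (nxt j)).2)| ≤
      ∑ j : Fin N, (|K1 j| + |K2 j| + |l1 j| + |l2 j|) := by
    refine (Finset.abs_sum_le_sum_abs _ _).trans (Finset.sum_le_sum fun j _ => ?_)
    cases hm : m j
    · rw [if_neg (by simp)]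
      refine (abs_add_le _ _).trans ?_
      rw [abs_mul, abs_mul, abs_spin, abs_spin, mul_one, mul_one,
        abs_mul, abs_mul, abs_spin, abs_spin, mul_one, mul_one]
      have := abs_nonneg (K1 j); have := abs_nonneg (K2 j); linarith
    · rw [if_pos rfl]
      refine (abs_add_le _ _).trans ?_
      rw [abs_mul, abs_mul, abs_spin, abs_spin, mul_one, mul_one,
        abs_mul, abs_mul, abs_spin, abs_spin, mul_one, mul_one]
      have := abs_nonneg (l1 j); have := abs_nonneg (l2 j); linarith
  calc |(∑ j : Fin N, L j * spin (σ j).1 * spin (σ j).2) + _| ≤ _ + _ := abs_add_le _ _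
    _ ≤ (∑ j : Fin N, |L j|) + ∑ j : Fin N, (|K1 j| + |K2 j| + |l1 j| + |l2 j|) :=
        add_le_add h1 h2
    _ = cS N K1 K2 L l1 l2 := Finset.sum_add_distrib.symm

lemma abs_log_ladderZt_le (N : ℕ) (β : ℝ) (hβ : 0 ≤ β) (K1 K2 L l1 l2 : Fin N → ℝ)
    (m : Fin N → Bool) :
    |Real.log (ladderZt N β K1 K2 L l1 l2 m)| ≤
      (N : ℝ) * Real.log 4 + β * cS N K1 K2 L l1 l2 := by
  have hS := cS_nonneg N K1 K2 L l1 l2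
  have hZ := ladderZt_pos N β K1 K2 L l1 l2 m
  have hcard : (Fintype.card (Fin N → Bool × Bool) : ℝ) = 4 ^ N := by
    simp [Fintype.card_fun]
  have h4 : 0 ≤ (N : ℝ) * Real.log 4 :=
    mul_nonneg (Nat.cast_nonneg N) (Real.log_nonneg (by norm_num))
  rw [abs_le]
  constructor
  · have hge : Real.exp (-(β * cS N K1 K2 L l1 l2)) ≤ ladderZt N β K1 K2 L l1 l2 m := by
      refine le_trans ?_ (Finset.single_le_sum (f := fun σ : Fin N → Bool × Bool =>
        Real.exp (β * ((∑ j : Fin N, L j * spin (σ j).1 * spin (σ j).2) +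
          ∑ j : Fin N,
            (if m j then K1 j * spin (σ j).1 * spin (σ (nxt j)).1 +
                K2 j * spin (σ j).2 * spin (σ (nxt j)).2
              else l1 j * spin (σ j).1 * spin (σ j).2 +
                l2 j * spin (σ (nxt j)).1 * spin (σ (nxt j)).2))))
        (fun _ _ => (Real.exp_pos _).le) (Finset.mem_univ (fun _ => (true, true))))
      apply Real.exp_le_exp.2
      have h := (abs_le.1 (ladderZt_expo_abs_le N K1 K2 L l1 l2 m (fun _ => (true, true)))).1
      calc -(β * cS N K1 K2 L l1 l2) = β * (-(cS N K1 K2 L l1 l2)) := by ring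
        _ ≤ _ := mul_le_mul_of_nonneg_left h hβ
    have := Real.log_le_log (Real.exp_pos _) hge
    rw [Real.log_exp] at this
    linarith
  · have hup : ladderZt N β K1 K2 L l1 l2 m ≤ (4:ℝ) ^ N * Real.exp (β * cS N K1 K2 L l1 l2) := by
      have hle : ladderZt N β K1 K2 L l1 l2 m ≤
          ∑ _σ : Fin N → Bool × Bool, Real.exp (β * cS N K1 K2 L l1 l2) :=
        Finset.sum_le_sum fun σ _ => Real.exp_le_exp.2 (mul_le_mul_of_nonneg_left
          ((le_abs_self _).trans (ladderZt_expo_abs_le N K1 K2 L l1 l2 m σ)) hβ)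
      rwa [Finset.sum_const, Finset.card_univ, nsmul_eq_mul, hcard] at hle
    have := Real.log_le_log hZ hup
    rwa [Real.log_mul (by positivity) (Real.exp_ne_zero _), Real.log_pow, Real.log_exp] at this

end AuxLemmas
section AuxLemmas2

open Finset Function

lemma ladderZt_continuous (N : ℕ) (β : ℝ) (m : Fin N → Bool) :
    Continuous (fun ω : (Fin N → ℝ) × (Fin N → ℝ) × (Fin N → ℝ) × (Fin N → ℝ) × (Fin N → ℝ) =>
      ladderZt N β ω.1 ω.2.1 ω.2.2.1 ω.2.2.2.1 ω.2.2.2.2 m) := by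
  unfold ladderZt
  refine continuous_finset_sum _ fun σ _ =>
    Real.continuous_exp.comp (continuous_const.mul (Continuous.add ?_ ?_))
  · refine continuous_finset_sum _ fun j _ => ?_
    exact (((continuous_apply j).comp
      (continuous_fst.comp (continuous_snd.comp continuous_snd))).mul
        continuous_const).mul continuous_const
  · refine continuous_finset_sum _ fun j _ => Continuous.if_const _ ?_ ?_
    · exact ((((continuous_apply j).comp continuous_fst).mul continuous_const).mul
        continuous_const).add
        ((((continuous_apply j).comp (continuous_fst.comp continuous_snd)).mul
          continuous_const).mul continuous_const)
    · exact ((((continuous_apply j).comp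
        (continuous_fst.comp (continuous_snd.comp (continuous_snd.comp continuous_snd)))).mul
          continuous_const).mul continuous_const).add
        ((((continuous_apply j).comp
          (continuous_snd.comp (continuous_snd.comp (continuous_snd.comp continuous_snd)))).mul
            continuous_const).mul continuous_const)

lemma log_ladderZt_continuous (N : ℕ) (β : ℝ) (m : Fin N → Bool) :
    Continuous (fun ω : (Fin N → ℝ) × (Fin N → ℝ) × (Fin N → ℝ) × (Fin N → ℝ) × (Fin N → ℝ) =>
      Real.log (ladderZt N β ω.1 ω.2.1 ω.2.2.1 ω.2.2.2.1 ω.2.2.2.2 m)) :=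
  (ladderZt_continuous N β m).log fun ω =>
    (ladderZt_pos N β ω.1 ω.2.1 ω.2.2.1 ω.2.2.2.1 ω.2.2.2.2 m).ne'

lemma measurePreserving_eval_pi {δ : Type*} [Fintype δ] [DecidableEq δ] (μ : MeasureTheory.Measure ℝ)
    [MeasureTheory.IsProbabilityMeasure μ] (j : δ) :
    MeasureTheory.MeasurePreserving (Function.eval j)
      (MeasureTheory.Measure.pi fun _ : δ => μ) μ := by
  refine ⟨measurable_pi_apply j, ?_⟩
  ext s hs
  rw [MeasureTheory.Measure.map_apply (measurable_pi_apply j) hs, Set.eval_preimage,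
    MeasureTheory.Measure.pi_pi]
  rw [Finset.prod_eq_single j (fun i _ hij => by
      rw [Function.update_of_ne hij]; exact measure_univ) (fun h => absurd (Finset.mem_univ j) h)]
  rw [Function.update_self]

lemma integrable_log_ladderZt (β : ℝ) (hβ : 0 ≤ β) (μ1 μ2 μL μl : MeasureTheory.Measure ℝ)
    [MeasureTheory.IsProbabilityMeasure μ1] [MeasureTheory.IsProbabilityMeasure μ2]
    [MeasureTheory.IsProbabilityMeasure μL] [MeasureTheory.IsProbabilityMeasure μl]
    (h1 : MeasureTheory.Integrable (fun x : ℝ => x) μ1)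
    (h2 : MeasureTheory.Integrable (fun x : ℝ => x) μ2)
    (hL : MeasureTheory.Integrable (fun x : ℝ => x) μL)
    (hl : MeasureTheory.Integrable (fun x : ℝ => x) μl)
    (N : ℕ) (m : Fin N → Bool) :
    MeasureTheory.Integrable (fun ω : (Fin N → ℝ) × (Fin N → ℝ) × (Fin N → ℝ) × (Fin N → ℝ) × (Fin N → ℝ) =>
      Real.log (ladderZt N β ω.1 ω.2.1 ω.2.2.1 ω.2.2.2.1 ω.2.2.2.2 m))
      ((MeasureTheory.Measure.pi fun _ : Fin N => μ1).prod
        ((MeasureTheory.Measure.pi fun _ : Fin N => μ2).prod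
          ((MeasureTheory.Measure.pi fun _ : Fin N => μL).prod
            ((MeasureTheory.Measure.pi fun _ : Fin N => μl).prod
              (MeasureTheory.Measure.pi fun _ : Fin N => μl))))) := by
  set P1 := MeasureTheory.Measure.pi fun _ : Fin N => μ1
  set P2 := MeasureTheory.Measure.pi fun _ : Fin N => μ2
  set PL := MeasureTheory.Measure.pi fun _ : Fin N => μL
  set Pl := MeasureTheory.Measure.pi fun _ : Fin N => μl
  set P := P1.prod (P2.prod (PL.prod (Pl.prod Pl))) with hP
  have mfst1 : MeasureTheory.MeasurePreserving Prod.fst P P1 := ⟨measurable_fst, by simp [hP]⟩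
  have msnd1 : MeasureTheory.MeasurePreserving Prod.snd P (P2.prod (PL.prod (Pl.prod Pl))) :=
    ⟨measurable_snd, by simp [hP]⟩
  have mfst2 : MeasureTheory.MeasurePreserving (fun ω : _ × _ × _ × _ × _ => ω.2.1) P P2 :=
    MeasureTheory.MeasurePreserving.comp
      (⟨measurable_fst, by simp⟩ : MeasureTheory.MeasurePreserving Prod.fst
        (P2.prod (PL.prod (Pl.prod Pl))) P2) msnd1
  have msnd2 : MeasureTheory.MeasurePreserving (fun ω : _ × _ × _ × _ × _ => ω.2.2) P
      (PL.prod (Pl.prod Pl)) :=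
    MeasureTheory.MeasurePreserving.comp
      (⟨measurable_snd, by simp⟩ : MeasureTheory.MeasurePreserving Prod.snd
        (P2.prod (PL.prod (Pl.prod Pl))) (PL.prod (Pl.prod Pl))) msnd1
  have mfst3 : MeasureTheory.MeasurePreserving (fun ω : _ × _ × _ × _ × _ => ω.2.2.1) P PL :=
    MeasureTheory.MeasurePreserving.comp
      (⟨measurable_fst, by simp⟩ : MeasureTheory.MeasurePreserving Prod.fst
        (PL.prod (Pl.prod Pl)) PL) msnd2
  have msnd3 : MeasureTheory.MeasurePreserving (fun ω : _ × _ × _ × _ × _ => ω.2.2.2) P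
      (Pl.prod Pl) :=
    MeasureTheory.MeasurePreserving.comp
      (⟨measurable_snd, by simp⟩ : MeasureTheory.MeasurePreserving Prod.snd
        (PL.prod (Pl.prod Pl)) (Pl.prod Pl)) msnd2
  have mfst4 : MeasureTheory.MeasurePreserving (fun ω : _ × _ × _ × _ × _ => ω.2.2.2.1) P Pl :=
    MeasureTheory.MeasurePreserving.comp
      (⟨measurable_fst, by simp⟩ : MeasureTheory.MeasurePreserving Prod.fst (Pl.prod Pl) Pl) msnd3
  have msnd4 : MeasureTheory.MeasurePreserving (fun ω : _ × _ × _ × _ × _ => ω.2.2.2.2) P Pl :=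
    MeasureTheory.MeasurePreserving.comp
      (⟨measurable_snd, by simp⟩ : MeasureTheory.MeasurePreserving Prod.snd (Pl.prod Pl) Pl) msnd3
  have habs : ∀ (μ : MeasureTheory.Measure ℝ), MeasureTheory.Integrable (fun x : ℝ => x) μ →
      MeasureTheory.Integrable (fun x : ℝ => |x|) μ := fun μ h => h.abs
  have iK1 : ∀ j : Fin N, MeasureTheory.Integrable
      (fun ω : (Fin N → ℝ) × (Fin N → ℝ) × (Fin N → ℝ) × (Fin N → ℝ) × (Fin N → ℝ) => |ω.1 j|) P :=
    fun j => (((measurePreserving_eval_pi μ1 j).comp mfst1).integrable_comp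
      continuous_abs.aestronglyMeasurable).2 (habs _ h1)
  have iK2 : ∀ j : Fin N, MeasureTheory.Integrable
      (fun ω : (Fin N → ℝ) × (Fin N → ℝ) × (Fin N → ℝ) × (Fin N → ℝ) × (Fin N → ℝ) => |ω.2.1 j|) P :=
    fun j => (((measurePreserving_eval_pi μ2 j).comp mfst2).integrable_comp
      continuous_abs.aestronglyMeasurable).2 (habs _ h2)
  have iL : ∀ j : Fin N, MeasureTheory.Integrable
      (fun ω : (Fin N → ℝ) × (Fin N → ℝ) × (Fin N → ℝ) × (Fin N → ℝ) × (Fin N → ℝ) => |ω.2.2.1 j|) P :=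
    fun j => (((measurePreserving_eval_pi μL j).comp mfst3).integrable_comp
      continuous_abs.aestronglyMeasurable).2 (habs _ hL)
  have il1 : ∀ j : Fin N, MeasureTheory.Integrable
      (fun ω : (Fin N → ℝ) × (Fin N → ℝ) × (Fin N → ℝ) × (Fin N → ℝ) × (Fin N → ℝ) => |ω.2.2.2.1 j|) P :=
    fun j => (((measurePreserving_eval_pi μl j).comp mfst4).integrable_comp
      continuous_abs.aestronglyMeasurable).2 (habs _ hl)
  have il2 : ∀ j : Fin N, MeasureTheory.Integrable
      (fun ω : (Fin N → ℝ) × (Fin N → ℝ) × (Fin N → ℝ) × (Fin N → ℝ) × (Fin N → ℝ) => |ω.2.2.2.2 j|) P :=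
    fun j => (((measurePreserving_eval_pi μl j).comp msnd4).integrable_comp
      continuous_abs.aestronglyMeasurable).2 (habs _ hl)
  have hSint : MeasureTheory.Integrable
      (fun ω : (Fin N → ℝ) × (Fin N → ℝ) × (Fin N → ℝ) × (Fin N → ℝ) × (Fin N → ℝ) =>
        (N : ℝ) * Real.log 4 + β * cS N ω.1 ω.2.1 ω.2.2.1 ω.2.2.2.1 ω.2.2.2.2) P := by
    refine (MeasureTheory.integrable_const _).add (MeasureTheory.Integrable.const_mul ?_ β)
    unfold cS
    refine MeasureTheory.integrable_finset_sum _ fun j _ => ?_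
    exact (iL j).add ((((iK1 j).add (iK2 j)).add (il1 j)).add (il2 j))
  refine hSint.mono' (log_ladderZt_continuous N β m).aestronglyMeasurable
    (MeasureTheory.ae_of_all _ fun ω => ?_)
  rw [Real.norm_eq_abs]
  exact abs_log_ladderZt_le N β hβ ω.1 ω.2.1 ω.2.2.1 ω.2.2.2.1 ω.2.2.2.2 m

end AuxLemmas2
section AuxLemmas3

open Finset Function

lemma sum_ite_update (N : ℕ) (m : Fin N → Bool) (i : Fin N) (b : Bool) (A B : Fin N → ℝ) :
    (∑ j : Fin N, if Function.update m i b j then A j else B j) =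
      (if b then A i else B i) + ∑ j ∈ Finset.univ.erase i, (if m j then A j else B j) := by
  rw [← Finset.add_sum_erase _ _ (Finset.mem_univ i), Function.update_self]
  congr 1
  refine Finset.sum_congr rfl fun j hj => ?_
  rw [Function.update_of_ne (Finset.mem_erase.1 hj).1]

lemma ladderCutW_one_pos (N : ℕ) (β : ℝ) (K1 K2 L l1 l2 : Fin N → ℝ) (m : Fin N → Bool)
    (i : Fin N) : 0 < ladderCutW N β K1 K2 L l1 l2 m i (fun _ => 1) :=
  Finset.sum_pos (fun _ _ => by positivity) Finset.univ_nonempty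

lemma ladderCutW_K (N : ℕ) (β : ℝ) (K1 K2 L l1 l2 : Fin N → ℝ) (m : Fin N → Bool) (i : Fin N) :
    ladderCutW N β K1 K2 L l1 l2 m i
        (fun σ => Real.exp (β * (K1 i * spin (σ i).1 * spin (σ (nxt i)).1 +
          K2 i * spin (σ i).2 * spin (σ (nxt i)).2))) =
      ladderZt N β K1 K2 L l1 l2 (Function.update m i true) := by
  unfold ladderCutW ladderZt
  refine Finset.sum_congr rfl fun σ _ => ?_
  rw [← Real.exp_add]
  congr 1
  rw [sum_ite_update N m i true
    (fun j => K1 j * spin (σ j).1 * spin (σ (nxt j)).1 + K2 j * spin (σ j).2 * spin (σ (nxt j)).2)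
    (fun j => l1 j * spin (σ j).1 * spin (σ j).2 + l2 j * spin (σ (nxt j)).1 * spin (σ (nxt j)).2),
    if_pos rfl]
  ring

lemma ladderCutW_l (N : ℕ) (β : ℝ) (K1 K2 L l1 l2 : Fin N → ℝ) (m : Fin N → Bool) (i : Fin N) :
    ladderCutW N β K1 K2 L l1 l2 m i
        (fun σ => Real.exp (β * (l1 i * spin (σ i).1 * spin (σ i).2 +
          l2 i * spin (σ (nxt i)).1 * spin (σ (nxt i)).2))) =
      ladderZt N β K1 K2 L l1 l2 (Function.update m i false) := by
  unfold ladderCutW ladderZt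
  refine Finset.sum_congr rfl fun σ _ => ?_
  rw [← Real.exp_add]
  congr 1
  rw [sum_ite_update N m i false
    (fun j => K1 j * spin (σ j).1 * spin (σ (nxt j)).1 + K2 j * spin (σ j).2 * spin (σ (nxt j)).2)
    (fun j => l1 j * spin (σ j).1 * spin (σ j).2 + l2 j * spin (σ (nxt j)).1 * spin (σ (nxt j)).2),
    if_neg (by simp)]
  ring

lemma log_ratio (N : ℕ) (β : ℝ) (K1 K2 L l1 l2 : Fin N → ℝ) (m : Fin N → Bool) (i : Fin N) :
    Real.log (ladderCutAvg N β K1 K2 L l1 l2 m i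
        (fun σ => Real.exp (β * (K1 i * spin (σ i).1 * spin (σ (nxt i)).1 +
          K2 i * spin (σ i).2 * spin (σ (nxt i)).2))) /
      ladderCutAvg N β K1 K2 L l1 l2 m i
        (fun σ => Real.exp (β * (l1 i * spin (σ i).1 * spin (σ i).2 +
          l2 i * spin (σ (nxt i)).1 * spin (σ (nxt i)).2)))) =
      Real.log (ladderZt N β K1 K2 L l1 l2 (Function.update m i true)) -
        Real.log (ladderZt N β K1 K2 L l1 l2 (Function.update m i false)) := by
  have h1 := ladderCutW_one_pos N β K1 K2 L l1 l2 m i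
  have hT := ladderZt_pos N β K1 K2 L l1 l2 (Function.update m i true)
  have hF := ladderZt_pos N β K1 K2 L l1 l2 (Function.update m i false)
  unfold ladderCutAvg
  rw [ladderCutW_K, ladderCutW_l]
  rw [show ladderZt N β K1 K2 L l1 l2 (Function.update m i true) /
      ladderCutW N β K1 K2 L l1 l2 m i (fun _ => 1) /
      (ladderZt N β K1 K2 L l1 l2 (Function.update m i false) /
        ladderCutW N β K1 K2 L l1 l2 m i (fun _ => 1)) =
      ladderZt N β K1 K2 L l1 l2 (Function.update m i true) /
        ladderZt N β K1 K2 L l1 l2 (Function.update m i false) by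
    field_simp]
  exact Real.log_div hT.ne' hF.ne'

lemma hasDerivAt_bern (t : ℝ) (b : Bool) :
    HasDerivAt (fun s => bern s b) (if b then (1:ℝ) else -1) t := by
  cases b
  · simpa [bern] using (hasDerivAt_id' t).const_sub (1:ℝ)
  · simpa [bern] using hasDerivAt_id' t

lemma sum_pair (N : ℕ) (i : Fin N) (f : (Fin N → Bool) → ℝ) :
    ∑ m : Fin N → Bool, f m =
      ∑ m : Fin N → Bool, (if m i then f m + f (Function.update m i false) else 0) := by
  have hsplit : ∀ m : Fin N → Bool,
      (if m i then f m + f (Function.update m i false) else 0) =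
        (if m i then f m else 0) + (if m i then f (Function.update m i false) else 0) := by
    intro m; by_cases h : m i <;> simp [h]
  have hbij : Function.Bijective
      (fun m : Fin N → Bool => Function.update m i (!(m i))) := by
    apply Function.Involutive.bijective
    intro m
    funext j
    by_cases h : j = i
    · subst h; simp
    · simp [Function.update_of_ne h]
  have h2 : ∑ m : Fin N → Bool, (if m i then f (Function.update m i false) else 0) =
      ∑ m : Fin N → Bool, (if m i then (0:ℝ) else f m) := by
    refine Fintype.sum_bijective _ hbij _ _ fun m => ?_
    by_cases h : m i
    · simp [h]
    · have hm : m i = false := by simpa using h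
      simp [hm]
  symm
  calc ∑ m : Fin N → Bool, (if m i then f m + f (Function.update m i false) else 0)
      = ∑ m : Fin N → Bool,
          ((if m i then f m else 0) + (if m i then f (Function.update m i false) else 0)) :=
        Finset.sum_congr rfl fun m _ => hsplit m
    _ = (∑ m : Fin N → Bool, (if m i then f m else 0)) +
          ∑ m : Fin N → Bool, (if m i then f (Function.update m i false) else 0) :=
        Finset.sum_add_distrib
    _ = (∑ m : Fin N → Bool, (if m i then f m else 0)) +
          ∑ m : Fin N → Bool, (if m i then (0:ℝ) else f m) := by rw [h2]
    _ = ∑ m : Fin N → Bool, f m := by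
        rw [← Finset.sum_add_distrib]
        exact Finset.sum_congr rfl fun m _ => by by_cases h : m i <;> simp [h]

lemma key_comb (N : ℕ) (t : ℝ) (I : (Fin N → Bool) → ℝ) :
    (∑ m : Fin N → Bool, (∑ i : Fin N,
        (∏ j ∈ Finset.univ.erase i, bern t (m j)) * (if m i then (1:ℝ) else -1)) * I m) =
      ∑ i : Fin N, ∑ m : Fin N → Bool, (∏ j : Fin N, bern t (m j)) *
        (I (Function.update m i true) - I (Function.update m i false)) := by
  simp_rw [Finset.sum_mul]
  rw [Finset.sum_comm]
  refine Finset.sum_congr rfl fun i _ => ?_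
  rw [sum_pair N i (fun m =>
      (∏ j ∈ Finset.univ.erase i, bern t (m j)) * (if m i then (1:ℝ) else -1) * I m),
    sum_pair N i (fun m => (∏ j : Fin N, bern t (m j)) *
      (I (Function.update m i true) - I (Function.update m i false)))]
  refine Finset.sum_congr rfl fun m _ => ?_
  by_cases h : m i
  · rw [if_pos h, if_pos h]
    have hw : (∏ j ∈ Finset.univ.erase i, bern t (Function.update m i false j)) =
        ∏ j ∈ Finset.univ.erase i, bern t (m j) :=
      Finset.prod_congr rfl fun j hj => by rw [Function.update_of_ne (Finset.mem_erase.1 hj).1]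
    have hmT : Function.update m i true = m := by rw [← h, Function.update_eq_self]
    have hmF2 : Function.update (Function.update m i false) i true = m := by
      rw [Function.update_idem]; exact hmT
    have hmFF : Function.update (Function.update m i false) i false =
        Function.update m i false := Function.update_idem ..
    have hPm : (∏ j : Fin N, bern t (m j)) =
        t * ∏ j ∈ Finset.univ.erase i, bern t (m j) := by
      rw [← Finset.mul_prod_erase Finset.univ (fun j => bern t (m j)) (Finset.mem_univ i), h]
      simp [bern]
    have hPm' : (∏ j : Fin N, bern t (Function.update m i false j)) =
        (1 - t) * ∏ j ∈ Finset.univ.erase i, bern t (m j) := by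
      rw [← Finset.mul_prod_erase Finset.univ (fun j => bern t (Function.update m i false j))
        (Finset.mem_univ i), Function.update_self, hw]
      simp [bern]
    rw [if_pos h, Function.update_self, if_neg (by simp), hw, hmT, hmF2, hmFF, hPm, hPm']
    ring
  · rw [if_neg h, if_neg h]

end AuxLemmas3
theorem ladder_interpolation_deriv (β : ℝ) (hβ : 0 < β) (μ1 μ2 μL μl : Measure ℝ)
    [IsProbabilityMeasure μ1] [IsProbabilityMeasure μ2] [IsProbabilityMeasure μL]
    [IsProbabilityMeasure μl]
    (hsym1 : Measure.map (fun x : ℝ => -x) μ1 = μ1)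
    (hsym2 : Measure.map (fun x : ℝ => -x) μ2 = μ2)
    (h1 : Integrable (fun x : ℝ => x) μ1) (h2 : Integrable (fun x : ℝ => x) μ2)
    (hL : Integrable (fun x : ℝ => x) μL) (hl : Integrable (fun x : ℝ => x) μl) :
    ∀ N : ℕ, 2 ≤ N → ∀ t ∈ Set.Icc (0:ℝ) 1,
      deriv (ladderFt β μ1 μ2 μL μl N) t =
        -(1 / (β * N)) * ∑ i : Fin N,
          ∫ ω : (Fin N → ℝ) × (Fin N → ℝ) × (Fin N → ℝ) × (Fin N → ℝ) × (Fin N → ℝ),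
            ∑ m : Fin N → Bool, (∏ j : Fin N, bern t (m j)) *
              Real.log
                (ladderCutAvg N β ω.1 ω.2.1 ω.2.2.1 ω.2.2.2.1 ω.2.2.2.2 m i
                    (fun σ => Real.exp (β * (ω.1 i * spin (σ i).1 * spin (σ (nxt i)).1 +
                      ω.2.1 i * spin (σ i).2 * spin (σ (nxt i)).2))) /
                  ladderCutAvg N β ω.1 ω.2.1 ω.2.2.1 ω.2.2.2.1 ω.2.2.2.2 m i
                    (fun σ => Real.exp (β * (ω.2.2.2.1 i * spin (σ i).1 * spin (σ i).2 +
                      ω.2.2.2.2 i * spin (σ (nxt i)).1 * spin (σ (nxt i)).2))))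
          ∂((Measure.pi fun _ : Fin N => μ1).prod ((Measure.pi fun _ : Fin N => μ2).prod
            ((Measure.pi fun _ : Fin N => μL).prod ((Measure.pi fun _ : Fin N => μl).prod
              (Measure.pi fun _ : Fin N => μl))))) := by
  intro N hN t ht
  have hint := integrable_log_ladderZt β hβ.le μ1 μ2 μL μl h1 h2 hL hl N
  -- rewrite `ladderFt` as a polynomial in `t`
  have hFt : ladderFt β μ1 μ2 μL μl N = fun s : ℝ =>
      -(1 / (β * N)) * ∑ m : Fin N → Bool, (∏ j : Fin N, bern s (m j)) *
        ∫ ω : (Fin N → ℝ) × (Fin N → ℝ) × (Fin N → ℝ) × (Fin N → ℝ) × (Fin N → ℝ),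
          Real.log (ladderZt N β ω.1 ω.2.1 ω.2.2.1 ω.2.2.2.1 ω.2.2.2.2 m)
        ∂((Measure.pi fun _ : Fin N => μ1).prod ((Measure.pi fun _ : Fin N => μ2).prod
          ((Measure.pi fun _ : Fin N => μL).prod ((Measure.pi fun _ : Fin N => μl).prod
            (Measure.pi fun _ : Fin N => μl))))) := by
    funext s
    unfold ladderFt
    congr 1
    rw [integral_finset_sum _ (fun m _ => (hint m).const_mul _)]
    exact Finset.sum_congr rfl fun m _ => integral_const_mul _ _
  rw [hFt]
  have hder : HasDerivAt (fun s : ℝ =>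
      -(1 / (β * N)) * ∑ m : Fin N → Bool, (∏ j : Fin N, bern s (m j)) *
        ∫ ω : (Fin N → ℝ) × (Fin N → ℝ) × (Fin N → ℝ) × (Fin N → ℝ) × (Fin N → ℝ),
          Real.log (ladderZt N β ω.1 ω.2.1 ω.2.2.1 ω.2.2.2.1 ω.2.2.2.2 m)
        ∂((Measure.pi fun _ : Fin N => μ1).prod ((Measure.pi fun _ : Fin N => μ2).prod
          ((Measure.pi fun _ : Fin N => μL).prod ((Measure.pi fun _ : Fin N => μl).prod
            (Measure.pi fun _ : Fin N => μl))))))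
      (-(1 / (β * N)) * ∑ m : Fin N → Bool, (∑ i : Fin N,
        (∏ j ∈ Finset.univ.erase i, bern t (m j)) * (if m i then (1:ℝ) else -1)) *
        ∫ ω : (Fin N → ℝ) × (Fin N → ℝ) × (Fin N → ℝ) × (Fin N → ℝ) × (Fin N → ℝ),
          Real.log (ladderZt N β ω.1 ω.2.1 ω.2.2.1 ω.2.2.2.1 ω.2.2.2.2 m)
        ∂((Measure.pi fun _ : Fin N => μ1).prod ((Measure.pi fun _ : Fin N => μ2).prod
          ((Measure.pi fun _ : Fin N => μL).prod ((Measure.pi fun _ : Fin N => μl).prod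
            (Measure.pi fun _ : Fin N => μl)))))) t := by
    refine HasDerivAt.const_mul _ (HasDerivAt.fun_sum fun m _ => ?_)
    have h := (HasDerivAt.fun_finsetProd (u := Finset.univ) (f := fun j s => bern s (m j))
        (f' := fun j => if m j then (1:ℝ) else -1)
        (fun j _ => hasDerivAt_bern t (m j))).mul_const
      (∫ ω : (Fin N → ℝ) × (Fin N → ℝ) × (Fin N → ℝ) × (Fin N → ℝ) × (Fin N → ℝ),
          Real.log (ladderZt N β ω.1 ω.2.1 ω.2.2.1 ω.2.2.2.1 ω.2.2.2.2 m)
        ∂((Measure.pi fun _ : Fin N => μ1).prod ((Measure.pi fun _ : Fin N => μ2).prod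
          ((Measure.pi fun _ : Fin N => μL).prod ((Measure.pi fun _ : Fin N => μl).prod
            (Measure.pi fun _ : Fin N => μl))))))
    simpa [smul_eq_mul] using h
  rw [hder.deriv]
  congr 1
  refine (key_comb N t fun m =>
      ∫ ω : (Fin N → ℝ) × (Fin N → ℝ) × (Fin N → ℝ) × (Fin N → ℝ) × (Fin N → ℝ),
        Real.log (ladderZt N β ω.1 ω.2.1 ω.2.2.1 ω.2.2.2.1 ω.2.2.2.2 m)
      ∂((Measure.pi fun _ : Fin N => μ1).prod ((Measure.pi fun _ : Fin N => μ2).prod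
        ((Measure.pi fun _ : Fin N => μL).prod ((Measure.pi fun _ : Fin N => μl).prod
          (Measure.pi fun _ : Fin N => μl)))))).trans ?_
  beta_reduce
  refine Finset.sum_congr rfl fun i _ => ?_
  symm
  simp only [log_ratio]
  refine Eq.trans (integral_finset_sum _ fun m _ => ?_) ?_
  · exact Integrable.const_mul ((hint _).sub (hint _)) _
  refine Finset.sum_congr rfl fun m _ => ?_
  refine (integral_const_mul _ _).trans ?_
  exact congrArg _ (integral_sub (hint _) (hint _))
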